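/- arXiv:2205.06750 — 3 statements merged into one kernel-verified Lean document; each statement's English description precedes it below -/
import Mathlib

section
/- Let S be a type of states and A a type of actions, let S_s ⊆ S be the set of safe states, let φ be a predicate on S × A (the safety function), let A_φ(s) = {a | φ(s,a)} and S_φ = {s | ∃ a, φ(s,a)}, and let T ⊆ S × A × S be a transition relation. Assume φ is sound, i.e., whenever φ(s,a) holds and (s,a,s') ∈ T, then s' ∈ S_s and there exists a' with φ(s',a'), and assume S_φ ⊆ S_s. Then for every initial state s₀ ∈ S_φ and every horizon p ∈ ℕ there exists a function ψ : S → A with φ(s, ψ(s)) for every s ∈ S_φ, such that every trajectory s₀, s₁, …, s_p satisfying (s_k, ψ(s_k), s_{k+1}) ∈ T for all k < p remains safe: s_k ∈ S_s for all 0 ≤ k ≤ p. -/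
/-- **Proposition 1.** If the safety function `φ` is sound and every provably safe state
is safe, then from any provably safe initial state `s₀` and for any horizon `p` there is a
replacement function `ψ` choosing provably safe actions on provably safe states, such that
every trajectory following `ψ` stays in the safe set up to time `p`. -/
theorem provably_safe_action_sequence_exists
    {S A : Type*} (Ss : Set S) (φ : S → A → Prop) (T : S → A → S → Prop)
    (hsound : ∀ s a s', φ s a → T s a s' → s' ∈ Ss ∧ ∃ a', φ s' a')
    (hsub : ∀ s, (∃ a, φ s a) → s ∈ Ss)
    (s₀ : S) (hs₀ : ∃ a, φ s₀ a) (p : ℕ) :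
    ∃ ψ : S → A,
      (∀ s, (∃ a, φ s a) → φ s (ψ s)) ∧
      ∀ traj : ℕ → S, traj 0 = s₀ →
        (∀ k, k < p → T (traj k) (ψ (traj k)) (traj (k + 1))) →
        ∀ k, k ≤ p → traj k ∈ Ss := by
  classical
  refine ⟨fun s => if h : ∃ a, φ s a then h.choose else hs₀.choose, fun s h => ?_, ?_⟩
  · simpa [h] using h.choose_spec
  · intro traj h0 hT
    have key : ∀ k, k ≤ p → ∃ a, φ (traj k) a := by
      intro k hk
      induction k with
      | zero => simpa [h0] using hs₀
      | succ n ih =>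
        have hn : n ≤ p := Nat.le_of_succ_le hk
        have hφ := ih hn
        have hstep := hT n (Nat.lt_of_succ_le hk)
        have hstep' : T (traj n) hφ.choose (traj (n + 1)) := by simpa [hφ] using hstep
        exact (hsound _ _ _ hφ.choose_spec hstep').2
    exact fun k hk => hsub _ (key k hk)
end

section
/- Let S be a type of states and A a type of actions, let S_s ⊆ S be the set of safe states, let φ be a predicate on S × A (the safety function), let A_φ(s) = {a | φ(s,a)}, let S_φ = {s | ∃ a, φ(s,a)}, and let T ⊆ S × A × S be a transition relation. Assume φ is sound, i.e., whenever φ(s,a) holds and (s,a,s') ∈ T, then s' ∈ S_s and there exists a' with φ(s',a'), and assume S_φ ⊆ S_s. Let ψ : S → A be a replacement function satisfying ψ(s) ∈ A_φ(s) for every s ∈ S_φ, and define the shielded action a^φ(s, a) = a if φ(s, a) holds and a^φ(s, a) = ψ(s) otherwise. Then for every initial state s₀ ∈ S_φ, every sequence of (arbitrary, possibly unsafe) proposed actions a₀, …, a_{p−1}, and every trajectory with (s_k, a^φ(s_k, a_k), s_{k+1}) ∈ T for all 0 ≤ k < p, one has s_k ∈ S_φ and s_k ∈ S_s for all 0 ≤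 k ≤ p. -/
open scoped Classical

/-- The shielded action: execute the proposed action `a` if it is verified safe by `φ`,
otherwise replace it by `ψ s`. -/
noncomputable def shieldedAction {S A : Type*} (φ : S → A → Prop) (ψ : S → A)
    (s : S) (a : A) : A :=
  if φ s a then a else ψ s

/-- **Safety of action replacement.** If `φ` is sound, every provably safe state is safe,
and the replacement function `ψ` returns a provably safe action on every provably safe state,
then any trajectory starting in a provably safe state and executing the shielded actions
(for an arbitrary sequence of proposed actions) stays provably safe and safe. -/
theorem action_replacement_is_safe
    {S A : Type*} (Ss : Set S) (φ : S → A → Prop) (T : S → A → S → Prop)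
    (hsound : ∀ s a s', φ s a → T s a s' → s' ∈ Ss ∧ ∃ a', φ s' a')
    (hsub : ∀ s, (∃ a, φ s a) → s ∈ Ss)
    (ψ : S → A) (hψ : ∀ s, (∃ a, φ s a) → φ s (ψ s))
    (p : ℕ) (s : ℕ → S) (a : ℕ → A)
    (hs₀ : ∃ a₀, φ (s 0) a₀)
    (hstep : ∀ k, k < p → T (s k) (shieldedAction φ ψ (s k) (a k)) (s (k + 1))) :
    ∀ k, k ≤ p → (∃ a', φ (s k) a') ∧ s k ∈ Ss := by
  intro k
  induction k with
  | zero => exact fun _ => ⟨hs₀, hsub _ hs₀⟩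
  | succ n ih =>
    intro hn
    have hs := ih (Nat.le_of_succ_le hn)
    have hT := hstep n (Nat.lt_of_succ_le hn)
    have hφ : φ (s n) (shieldedAction φ ψ (s n) (a n)) := by
      unfold shieldedAction
      split
      · assumption
      · exact hψ _ hs.1
    have := hsound _ _ _ hφ hT
    exact ⟨this.2, hsub _ this.2⟩
end

section
/- Let S be a countable type of states, A a countable type of actions, S_s ⊆ S the set of safe states, φ a predicate on S × A with A_φ(s) = {a | φ(s,a)} and S_φ = {s | ∃ a, φ(s,a)}. Let T : S → A → S → ℝ≥0∞ be a transition kernel and assume probabilistic soundness of φ: whenever φ(s,a) holds and T s a s' > 0, then s' ∈ S_s and s' ∈ S_φ. Let π_r : S → A → ℝ≥0∞ be a replacement policy supported on the safe actions, i.e., π_r s a > 0 implies a ∈ A_φ(s). Define the modified transition function T_φ s a s' = T s a s' if φ(s,a) holds, and T_φ s a s' = ∑'_{ã} π_r s ã * T s ã s' otherwise. Then for every s ∈ S_φ, every action a ∈ A, and every s' with T_φ s a s' > 0, one has s' ∈ S_s and s' ∈ S_φ. -/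
open scoped Classical

/-- The transition kernel of the replacement-modified MDP: execute the agent's action if it
is verified safe, otherwise sample a replacement action from `π_r` and execute it. -/
noncomputable def replacedKernel {S A : Type*} (φ : S → A → Prop)
    (T : S → A → S → ENNReal) (πr : S → A → ENNReal) (s : S) (a : A) (s' : S) : ENNReal :=
  if φ s a then T s a s' else ∑' b, πr s b * T s b s'

/-- **One-step safety of the replacement-modified MDP.** If `φ` is probabilistically sound
and the replacement policy `π_r` is supported on provably safe actions, then from any
provably safe state, every next state reachable with positive probability under the
modified kernel is safe and provably safe, regardless of the agent's action. -/
theorem replaced_mdp_one_step_safe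
    {S A : Type*} [Countable S] [Countable A]
    (Ss : Set S) (φ : S → A → Prop) (T : S → A → S → ENNReal)
    (hsound : ∀ s a s', φ s a → 0 < T s a s' → s' ∈ Ss ∧ ∃ a', φ s' a')
    (πr : S → A → ENNReal) (hπr : ∀ s a, 0 < πr s a → φ s a) :
    ∀ s, (∃ a₀, φ s a₀) → ∀ a s', 0 < replacedKernel φ T πr s a s' →
      s' ∈ Ss ∧ ∃ a', φ s' a' := by
  intro s _ a s' hpos
  unfold replacedKernel at hpos
  by_cases h : φ s a
  · rw [if_pos h] at hpos
    exact hsound s a s' h hpos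
  · rw [if_neg h] at hpos
    obtain ⟨b, hb⟩ : ∃ b, 0 < πr s b * T s b s' := by
      by_contra hc
      push_neg at hc
      simp only [nonpos_iff_eq_zero] at hc
      simp [hc] at hpos
    have hπ : 0 < πr s b := pos_of_mul_pos_left (by simpa using hb) (by simp)
    have hT : 0 < T s b s' := by
      rcases pos_iff_ne_zero.mp hb with _
      by_contra hT
      simp [nonpos_iff_eq_zero.mp (not_lt.mp hT)] at hb
    exact hsound s b s' (hπr s b hπ) hT
end
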